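/- arXiv:0803.0503 — 2 statements merged into one kernel-verified Lean document; each statement's English description precedes it below -/
import Mathlib

section
/- Let p ≥ 1. Then for all real t with 0 ≤ t ≤ 1 and all complex numbers a, one has |a−t|^p ≥ (1−t)^{p−1} (|a|^p − t). Moreover, if p > 1, the inequality is strict unless a = 1 or t = 0. -/
open Real

private lemma rw_aux (p t r : ℝ) (ht1 : t < 1) (htr : t ≤ r) :
    (1 - t) ^ (p - 1) * ((1 - t) * ((r - t) / (1 - t)) ^ p) = (r - t) ^ p := by
  have h1t : (0:ℝ) < 1 - t := by linarith
  have hpos : (0:ℝ) < (1 - t) ^ p := Real.rpow_pos_of_pos h1t p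
  rw [Real.div_rpow (by linarith) h1t.le, Real.rpow_sub_one h1t.ne']
  field_simp

private lemma key_le (p t r : ℝ) (hp : 1 ≤ p) (ht0 : 0 ≤ t) (ht1 : t < 1) (htr : t ≤ r) :
    (1 - t) ^ (p - 1) * (r ^ p - t) ≤ (r - t) ^ p := by
  have h1t : (0:ℝ) < 1 - t := by linarith
  set u := (r - t) / (1 - t) with hu
  have hu0 : 0 ≤ u := div_nonneg (by linarith) h1t.le
  have hr : r = t + (1 - t) * u := by rw [hu]; field_simp; ring
  have hconv := (convexOn_rpow hp).2 (Set.mem_Ici.2 zero_le_one) (Set.mem_Ici.2 hu0)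
      ht0 h1t.le (by ring)
  simp only [smul_eq_mul, Real.one_rpow, mul_one] at hconv
  rw [← hr] at hconv
  have h2 : (1 - t) ^ (p - 1) * (r ^ p - t) ≤ (1 - t) ^ (p - 1) * ((1 - t) * u ^ p) := by
    apply mul_le_mul_of_nonneg_left _ (Real.rpow_nonneg h1t.le _)
    linarith
  exact h2.trans_eq (rw_aux p t r ht1 htr)

private lemma key_lt (p t r : ℝ) (hp : 1 < p) (ht0 : 0 < t) (ht1 : t < 1) (htr : t ≤ r)
    (hr1 : r ≠ 1) :
    (1 - t) ^ (p - 1) * (r ^ p - t) < (r - t) ^ p := by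
  have h1t : (0:ℝ) < 1 - t := by linarith
  set u := (r - t) / (1 - t) with hu
  have hu0 : 0 ≤ u := div_nonneg (by linarith) h1t.le
  have hr : r = t + (1 - t) * u := by rw [hu]; field_simp; ring
  have hune : (1:ℝ) ≠ u := by
    intro h
    apply hr1
    rw [hr, ← h]; ring
  have hconv := (strictConvexOn_rpow hp).2 (Set.mem_Ici.2 zero_le_one) (Set.mem_Ici.2 hu0)
      hune ht0 h1t (by ring)
  simp only [smul_eq_mul, Real.one_rpow, mul_one] at hconv
  rw [← hr] at hconv
  have h2 : (1 - t) ^ (p - 1) * (r ^ p - t) < (1 - t) ^ (p - 1) * ((1 - t) * u ^ p) := by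
    apply mul_lt_mul_of_pos_left _ (Real.rpow_pos_of_pos h1t _)
    linarith
  exact h2.trans_eq (rw_aux p t r ht1 htr)

/-- Lemma 2.6, first part: for `p ≥ 1`, `0 ≤ t ≤ 1` and `a ∈ ℂ`,
`|a−t|^p ≥ (1−t)^{p−1} (|a|^p − t)`, with strict inequality for `p > 1` unless
`a = 1` or `t = 0`. -/
theorem elementary_inequality (p : ℝ) (hp : 1 ≤ p) (t : ℝ) (ht0 : 0 ≤ t) (ht1 : t ≤ 1)
    (a : ℂ) :
    (1 - t) ^ (p - 1) * (‖a‖ ^ p - t) ≤ ‖a - (t : ℂ)‖ ^ p ∧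
    (1 < p → a ≠ 1 → t ≠ 0 →
      (1 - t) ^ (p - 1) * (‖a‖ ^ p - t) < ‖a - (t : ℂ)‖ ^ p) := by
  set r := ‖a‖ with hrdef
  set s := ‖a - (t : ℂ)‖ with hsdef
  have hr0 : 0 ≤ r := norm_nonneg a
  have hs0 : 0 ≤ s := norm_nonneg _
  have habs_t : ‖((t : ℂ))‖ = t := by
    rw [Complex.norm_real, Real.norm_of_nonneg ht0]
  have hst : r - t ≤ s := by
    have h := norm_add_le (a - (t:ℂ)) (t:ℂ)
    simp only [sub_add_cancel, habs_t] at h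
    linarith
  -- case p = 1
  rcases eq_or_lt_of_le hp with hp1 | hp1
  · constructor
    · rw [← hp1]
      simp only [sub_self, Real.rpow_zero, one_mul, Real.rpow_one]
      exact hst
    · intro h; exact absurd hp1 (ne_of_lt h)
  -- now 1 < p
  have hp0 : 0 < p := by linarith
  have hcoeff0 : 0 ≤ (1 - t) ^ (p - 1) := Real.rpow_nonneg (by linarith) _
  -- main nonstrict inequality with strictness info
  have key : ∀ (ha1 : a ≠ 1) (ht0' : 0 < t),
      (1 - t) ^ (p - 1) * (r ^ p - t) < s ^ p := by
    intro ha1 ht0'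
    rcases eq_or_lt_of_le ht1 with ht1' | ht1'
    · -- t = 1
      have : (1 - t) ^ (p - 1) = 0 := by
        rw [← ht1', sub_self, Real.zero_rpow (by linarith)]
      rw [this, zero_mul]
      apply Real.rpow_pos_of_pos
      have : a - (t:ℂ) ≠ 0 := by
        intro h
        apply ha1
        rw [sub_eq_zero.mp h, ht1']
        norm_num
      exact (norm_pos_iff.mpr this)
    -- t < 1
    rcases le_or_gt r t with hrt | hrt
    · -- r ≤ t : LHS ≤ 0
      have hrp : r ^ p ≤ t := by
        rcases eq_or_lt_of_le hr0 with h0 | h0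
        · rw [← h0, Real.zero_rpow hp0.ne']; exact ht0
        · calc r ^ p ≤ r ^ (1:ℝ) :=
                Real.rpow_le_rpow_of_exponent_ge h0 (by linarith) hp
            _ = r := Real.rpow_one r
            _ ≤ t := hrt
      by_cases hat : a = (t : ℂ)
      · -- a = t : r = t, strict since t^p < t
        have hrt' : r = t := by rw [hrdef, hat, habs_t]
        have : r ^ p < t := by
          rw [hrt']
          calc t ^ p < t ^ (1:ℝ) := Real.rpow_lt_rpow_of_exponent_gt ht0' ht1' hp1
            _ = t := Real.rpow_one t
        have hcoeffpos : 0 < (1 - t) ^ (p - 1) := Real.rpow_pos_of_pos (by linarith) _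
        have : (1 - t) ^ (p - 1) * (r ^ p - t) < 0 := by
          apply mul_neg_of_pos_of_neg hcoeffpos; linarith
        calc (1 - t) ^ (p - 1) * (r ^ p - t) < 0 := this
          _ ≤ s ^ p := Real.rpow_nonneg hs0 p
      · have hspos : 0 < s := norm_pos_iff.mpr (sub_ne_zero.mpr hat)
        calc (1 - t) ^ (p - 1) * (r ^ p - t) ≤ 0 :=
            mul_nonpos_of_nonneg_of_nonpos hcoeff0 (by linarith)
          _ < s ^ p := Real.rpow_pos_of_pos hspos p
    · -- t < r
      by_cases hr1 : r = 1
      · -- r = 1 : show s > 1 - t strictly using a ≠ 1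
        have hsgt : 1 - t < s := by
          rcases lt_or_ge (1 - t) s with h | h
          · exact h
          · exfalso
            -- s ≤ 1 - t and s ≥ r - t = 1 - t, so s = 1 - t
            have hseq : s = 1 - t := le_antisymm h (by rw [← hr1] at *; linarith)
            have h1 : s ^ 2 = (a.re - t) ^ 2 + a.im ^ 2 := by
              rw [hsdef, Complex.sq_norm, Complex.normSq_apply]
              simp [Complex.sub_re, Complex.sub_im, Complex.ofReal_re, Complex.ofReal_im]
              ring
            have h2 : r ^ 2 = a.re ^ 2 + a.im ^ 2 := by
              rw [hrdef, Complex.sq_norm, Complex.normSq_apply]; ring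
            rw [hr1] at h2
            rw [hseq] at h1
            have hare : a.re = 1 := by nlinarith
            have haim : a.im = 0 := by nlinarith
            exact ha1 (Complex.ext (by simp [hare]) (by simp [haim]))
        calc (1 - t) ^ (p - 1) * (r ^ p - t) ≤ (r - t) ^ p :=
            key_le p t r hp ht0 ht1' hrt.le
          _ = (1 - t) ^ p := by rw [hr1]
          _ < s ^ p := Real.rpow_lt_rpow (by linarith) hsgt hp0
      · calc (1 - t) ^ (p - 1) * (r ^ p - t) < (r - t) ^ p :=
            key_lt p t r hp1 ht0' ht1' hrt.le hr1
          _ ≤ s ^ p := Real.rpow_le_rpow (by linarith) hst hp0.le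
  constructor
  · -- nonstrict
    rcases eq_or_lt_of_le ht1 with ht1' | ht1'
    · have : (1 - t) ^ (p - 1) = 0 := by
        rw [← ht1', sub_self, Real.zero_rpow (by linarith)]
      rw [this, zero_mul]
      exact Real.rpow_nonneg hs0 p
    rcases le_or_gt r t with hrt | hrt
    · have hrp : r ^ p ≤ t := by
        rcases eq_or_lt_of_le hr0 with h0 | h0
        · rw [← h0, Real.zero_rpow hp0.ne']; exact ht0
        · calc r ^ p ≤ r ^ (1:ℝ) :=
                Real.rpow_le_rpow_of_exponent_ge h0 (by linarith) hp
            _ = r := Real.rpow_one r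
            _ ≤ t := hrt
      calc (1 - t) ^ (p - 1) * (r ^ p - t) ≤ 0 :=
          mul_nonpos_of_nonneg_of_nonpos hcoeff0 (by linarith)
        _ ≤ s ^ p := Real.rpow_nonneg hs0 p
    · calc (1 - t) ^ (p - 1) * (r ^ p - t) ≤ (r - t) ^ p :=
          key_le p t r hp ht0 ht1' hrt.le
        _ ≤ s ^ p := Real.rpow_le_rpow (by linarith) hst hp0.le
  · intro _ ha1 ht0'
    exact key ha1 (lt_of_le_of_ne ht0 (Ne.symm ht0'))
end

section
/- Let N ≥ 1, 0 < s ≤ 1, 1 ≤ p < N/s, and set p* := Np/(N−ps). Let u be a nonnegative symmetric decreasing function on ℝ^N, i.e. u(x) = g(|x|) for a nonincreasing function g : [0,∞) → [0,∞), and assume that μ_u(t) := |{x : u(x) > t}| is finite for every t > 0. Then ‖u‖_{p*,p}^p = (N/|𝕊^{N−1}|)^{ps/N} ∫_{ℝ^N} u(x)^p |x|^{−ps} dx, where |𝕊^{N−1}| denotes the surface measure of the unit sphere in ℝ^N. -/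
open MeasureTheory Real
open scoped ENNReal

/-- Surface measure of the unit sphere 𝕊^{n-1} in ℝ^n: n times the unit ball volume. -/
noncomputable def sphereArea (n : ℕ) : ℝ :=
  n * (volume (Metric.ball (0 : EuclideanSpace ℝ (Fin n)) 1)).toReal

/-- The Lorentz quasinorm `‖u‖_{q,r} = (q ∫_0^∞ μ_u(t)^{r/q} t^{r−1} dt)^{1/r}`, where
`μ_u(t) = |{x : |u(x)| > t}|`. -/
noncomputable def lorentzNorm (N : ℕ) (q r : ℝ) (u : EuclideanSpace ℝ (Fin N) → ℝ) : ℝ≥0∞ :=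
  (ENNReal.ofReal q * ∫⁻ t in Set.Ioi (0 : ℝ),
    volume {x | t < |u x|} ^ (r / q) * ENNReal.ofReal (t ^ (r - 1))) ^ (1 / r)

open Set Metric in
/-- The integral of `‖x‖ ^ (-a)` over the ball of radius `ρ`. -/
lemma lintegral_ball_rpow_neg (N : ℕ) (hN : 1 ≤ N) {a : ℝ} (ha0 : 0 < a)
    (haN : a < N) {ρ : ℝ} (hρ : 0 ≤ ρ) :
    ∫⁻ x in ball (0 : EuclideanSpace ℝ (Fin N)) ρ, ENNReal.ofReal (‖x‖ ^ (-a)) =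
      ENNReal.ofReal (((N : ℝ) / ((N : ℝ) - a)) * ρ ^ ((N : ℝ) - a)) *
        volume (ball (0 : EuclideanSpace ℝ (Fin N)) 1) := by
  have hNR : (0 : ℝ) < N := by exact_mod_cast Nat.lt_of_lt_of_le Nat.zero_lt_one hN
  have hNa : (0 : ℝ) < (N : ℝ) - a := sub_pos.mpr haN
  have hneg : -a < 0 := neg_lt_zero.mpr ha0
  haveI : Nontrivial (EuclideanSpace ℝ (Fin N)) := by
    refine Module.nontrivial_of_finrank_pos (R := ℝ) ?_
    rw [finrank_euclideanSpace_fin]; exact hN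
  set ω := volume (ball (0 : EuclideanSpace ℝ (Fin N)) 1) with hω_def
  have hω_fin : ω < ⊤ := measure_ball_lt_top
  have hvol_ball : ∀ r : ℝ, 0 ≤ r →
      volume (ball (0 : EuclideanSpace ℝ (Fin N)) r) = ENNReal.ofReal (r ^ (N : ℝ)) * ω := by
    intro r hr
    rw [Measure.addHaar_ball volume _ hr, finrank_euclideanSpace_fin, ← Real.rpow_natCast]
  have hmf : Measurable fun x : EuclideanSpace ℝ (Fin N) => ‖x‖ ^ (-a) :=
    measurable_norm.pow_const (-a)
  have key := lintegral_eq_lintegral_meas_lt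
    (volume.restrict (ball (0 : EuclideanSpace ℝ (Fin N)) ρ))
    (ae_of_all _ fun x => Real.rpow_nonneg (norm_nonneg x) (-a)) hmf.aemeasurable
  rw [key]
  have hset : ∀ t ∈ Ioi (0 : ℝ),
      (volume.restrict (ball (0 : EuclideanSpace ℝ (Fin N)) ρ))
        {x : EuclideanSpace ℝ (Fin N) | t < ‖x‖ ^ (-a)}
      = ENNReal.ofReal (min ρ (t ^ (-a)⁻¹) ^ (N : ℝ)) * ω := by
    intro t ht
    have ht' : (0 : ℝ) < t := ht
    rw [Measure.restrict_apply (measurableSet_lt measurable_const hmf)]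
    have hiff : ∀ x : EuclideanSpace ℝ (Fin N), x ≠ 0 →
        (t < ‖x‖ ^ (-a) ↔ ‖x‖ < t ^ (-a)⁻¹) := by
      intro x hx
      exact (Real.lt_rpow_inv_iff_of_neg (norm_pos_iff.mpr hx) ht' hneg).symm
    have hseteq : {x : EuclideanSpace ℝ (Fin N) | t < ‖x‖ ^ (-a)}
          ∩ ball (0 : EuclideanSpace ℝ (Fin N)) ρ
        = ball (0 : EuclideanSpace ℝ (Fin N)) (min ρ (t ^ (-a)⁻¹)) \ {0} := by
      ext x
      simp only [Set.mem_inter_iff, Set.mem_setOf_eq, Set.mem_diff, Set.mem_singleton_iff,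
        mem_ball_zero_iff, lt_min_iff]
      constructor
      · rintro ⟨h1, h2⟩
        have hx : x ≠ 0 := by
          rintro rfl
          rw [norm_zero, Real.zero_rpow (neg_ne_zero.mpr ha0.ne')] at h1
          exact absurd h1 (not_lt.mpr ht'.le)
        exact ⟨⟨h2, (hiff x hx).mp h1⟩, hx⟩
      · rintro ⟨⟨h2, h3⟩, hx⟩
        exact ⟨(hiff x hx).mpr h3, h2⟩
    rw [hseteq, measure_diff_null (measure_singleton _),
      hvol_ball _ (le_min hρ (Real.rpow_nonneg ht'.le _))]
  rw [setLIntegral_congr_fun measurableSet_Ioi hset,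
    lintegral_mul_const' ω _ hω_fin.ne]
  congr 1
  rcases hρ.eq_or_lt with rfl | hρ0
  · have hzero : ∀ t ∈ Ioi (0 : ℝ),
        ENNReal.ofReal (min 0 (t ^ (-a)⁻¹) ^ (N : ℝ)) = 0 := by
      intro t ht
      rw [min_eq_left (Real.rpow_nonneg (le_of_lt ht) _), Real.zero_rpow hNR.ne',
        ENNReal.ofReal_zero]
    rw [setLIntegral_congr_fun measurableSet_Ioi hzero, lintegral_zero,
      Real.zero_rpow hNa.ne', mul_zero, ENNReal.ofReal_zero]
  · have hc : (0 : ℝ) < ρ ^ (-a) := Real.rpow_pos_of_pos hρ0 _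
    rw [← Ioc_union_Ioi_eq_Ioi hc.le,
      lintegral_union measurableSet_Ioi (Set.Ioc_disjoint_Ioi le_rfl)]
    have h1 : ∫⁻ t in Ioc (0 : ℝ) (ρ ^ (-a)),
        ENNReal.ofReal (min ρ (t ^ (-a)⁻¹) ^ (N : ℝ))
        = ENNReal.ofReal (ρ ^ ((N : ℝ) - a)) := by
      have hpt : ∀ t ∈ Ioc (0 : ℝ) (ρ ^ (-a)),
          ENNReal.ofReal (min ρ (t ^ (-a)⁻¹) ^ (N : ℝ))
            = ENNReal.ofReal (ρ ^ (N : ℝ)) := by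
        intro t ht
        rw [min_eq_left ((Real.le_rpow_inv_iff_of_neg hρ0 ht.1 hneg).mpr ht.2)]
      rw [setLIntegral_congr_fun measurableSet_Ioc hpt, setLIntegral_const,
        Real.volume_Ioc, sub_zero, ← ENNReal.ofReal_mul (Real.rpow_nonneg hρ0.le _),
        ← Real.rpow_add hρ0, ← sub_eq_add_neg]
    have h2 : ∫⁻ t in Ioi (ρ ^ (-a)),
        ENNReal.ofReal (min ρ (t ^ (-a)⁻¹) ^ (N : ℝ))
        = ENNReal.ofReal (ρ ^ ((N : ℝ) - a) * (a / ((N : ℝ) - a))) := by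
      have hpt : ∀ t ∈ Ioi (ρ ^ (-a)),
          ENNReal.ofReal (min ρ (t ^ (-a)⁻¹) ^ (N : ℝ))
            = ENNReal.ofReal (t ^ (-((N : ℝ) / a))) := by
        intro t ht
        have ht0 : 0 < t := hc.trans ht
        rw [min_eq_right ((Real.rpow_inv_le_iff_of_neg ht0 hρ0 hneg).mpr (le_of_lt ht)),
          ← Real.rpow_mul ht0.le,
          show (-a)⁻¹ * (N : ℝ) = -((N : ℝ) / a) by
            rw [inv_neg, neg_mul, mul_comm a⁻¹ (N : ℝ), ← div_eq_mul_inv]]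
      have hlt : -((N : ℝ) / a) < -1 := by
        rw [neg_lt_neg_iff]
        exact (one_lt_div ha0).mpr haN
      rw [setLIntegral_congr_fun measurableSet_Ioi hpt,
        ← ofReal_integral_eq_lintegral_ofReal (integrableOn_Ioi_rpow_of_lt hlt hc)
          ((ae_restrict_iff' measurableSet_Ioi).mpr
            (ae_of_all _ fun t ht => Real.rpow_nonneg (hc.trans ht).le _)),
        integral_Ioi_rpow_of_lt hlt hc]
      congr 1
      rw [← Real.rpow_mul hρ0.le,
        show (-a) * (-((N : ℝ) / a) + 1) = (N : ℝ) - a by field_simp; ring,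
        show -((N : ℝ) / a) + 1 = (a - (N : ℝ)) / a by rw [sub_div, div_self ha0.ne']; ring,
        div_div_eq_mul_div, show a - (N : ℝ) = -((N : ℝ) - a) by ring,
        div_neg, neg_mul, neg_div, neg_neg, mul_div_assoc]
    rw [h1, h2, ← ENNReal.ofReal_add (Real.rpow_nonneg hρ0.le _) (by positivity)]
    congr 1
    generalize ρ ^ ((N : ℝ) - a) = X
    field_simp
    ring

open Set Metric in
/-- Lemma 4.4: for a nonnegative symmetric decreasing `u`,
`‖u‖_{p*,p}^p = (N/|𝕊^{N−1}|)^{ps/N} ∫ u(x)^p |x|^{−ps} dx` with `p* = Np/(N−ps)`,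
for `0 < s ≤ 1` and `1 ≤ p < N/s`. -/
theorem lorentz_norm_of_symmDecreasing (N : ℕ) (hN : 1 ≤ N) (s p : ℝ)
    (hs0 : 0 < s) (hs1 : s ≤ 1) (hp1 : 1 ≤ p) (hp : p < (N : ℝ) / s)
    (u : EuclideanSpace ℝ (Fin N) → ℝ) (g : ℝ → ℝ)
    (hg_anti : AntitoneOn g (Set.Ici 0)) (hg_nonneg : ∀ r, 0 ≤ r → 0 ≤ g r)
    (hug : ∀ x, u x = g ‖x‖)
    (hμ : ∀ t > (0 : ℝ), volume {x : EuclideanSpace ℝ (Fin N) | t < u x} < ⊤) :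
    lorentzNorm N ((N : ℝ) * p / ((N : ℝ) - p * s)) p u ^ p
      = ENNReal.ofReal (((N : ℝ) / sphereArea N) ^ (p * s / (N : ℝ)))
        * ∫⁻ x, ENNReal.ofReal (u x ^ p * ‖x‖ ^ (-(p * s))) := by
  have hp0 : (0 : ℝ) < p := lt_of_lt_of_le one_pos hp1
  have ha0 : (0 : ℝ) < p * s := mul_pos hp0 hs0
  have hNR : (0 : ℝ) < N := by exact_mod_cast Nat.lt_of_lt_of_le Nat.zero_lt_one hN
  have haN : p * s < (N : ℝ) := (lt_div_iff₀ hs0).mp hp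
  have hNa : (0 : ℝ) < (N : ℝ) - p * s := sub_pos.mpr haN
  haveI : Nontrivial (EuclideanSpace ℝ (Fin N)) := by
    refine Module.nontrivial_of_finrank_pos (R := ℝ) ?_
    rw [finrank_euclideanSpace_fin]; exact hN
  set ω := volume (ball (0 : EuclideanSpace ℝ (Fin N)) 1) with hω_def
  have hω_fin : ω < ⊤ := measure_ball_lt_top
  have hω_pos : 0 < ω := measure_ball_pos volume _ one_pos
  have hvol_ball : ∀ r : ℝ, 0 ≤ r →
      volume (ball (0 : EuclideanSpace ℝ (Fin N)) r) = ENNReal.ofReal (r ^ (N : ℝ)) * ω := by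
    intro r hr
    rw [Measure.addHaar_ball volume _ hr, finrank_euclideanSpace_fin, ← Real.rpow_natCast]
  have hvol_cball : ∀ r : ℝ, 0 ≤ r →
      volume (closedBall (0 : EuclideanSpace ℝ (Fin N)) r)
        = ENNReal.ofReal (r ^ (N : ℝ)) * ω := by
    intro r hr
    rw [Measure.addHaar_closedBall volume _ hr, finrank_euclideanSpace_fin, ← Real.rpow_natCast]
  have hu_nonneg : ∀ x, 0 ≤ u x := fun x => by
    rw [hug x]; exact hg_nonneg _ (norm_nonneg x)
  have hg' : Antitone fun r : ℝ => g (max r 0) := by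
    intro r1 r2 h
    exact hg_anti (Set.mem_Ici.mpr (le_max_right _ _)) (Set.mem_Ici.mpr (le_max_right _ _))
      (max_le_max h le_rfl)
  have hu_meas : Measurable u := by
    have : u = fun x => g (max ‖x‖ 0) := funext fun x => by
      rw [hug x, max_eq_left (norm_nonneg x)]
    rw [this]
    exact hg'.measurable.comp measurable_norm
  -- superlevel sets are sandwiched between balls
  have key : ∀ t : ℝ, 0 < t → ∃ r : ℝ, 0 ≤ r ∧
      ball (0 : EuclideanSpace ℝ (Fin N)) r ⊆ {x : EuclideanSpace ℝ (Fin N) | t < u x} ∧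
      {x : EuclideanSpace ℝ (Fin N) | t < u x} ⊆ closedBall (0 : EuclideanSpace ℝ (Fin N)) r := by
    intro t ht
    by_cases hA : ∃ r0 : ℝ, 0 ≤ r0 ∧ t < g r0
    · obtain ⟨r0, hr00, hr0⟩ := hA
      set A : Set ℝ := {r : ℝ | 0 ≤ r ∧ t < g r} with hA_def
      have hAne : A.Nonempty := ⟨r0, hr00, hr0⟩
      have hdown : ∀ r ∈ A, ∀ r' : ℝ, 0 ≤ r' → r' ≤ r → r' ∈ A := by
        intro r hr r' h0 hle
        exact ⟨h0, lt_of_lt_of_le hr.2 (hg_anti (Set.mem_Ici.mpr h0) (Set.mem_Ici.mpr hr.1) hle)⟩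
      have hbdd : BddAbove A := by
        by_contra hub
        rw [not_bddAbove_iff] at hub
        have hballsub : ∀ R : ℝ, ball (0 : EuclideanSpace ℝ (Fin N)) R
            ⊆ {x : EuclideanSpace ℝ (Fin N) | t < u x} := by
          intro R x hx
          obtain ⟨r, hrA, hRr⟩ := hub R
          have hxA : ‖x‖ ∈ A := hdown r hrA ‖x‖ (norm_nonneg x)
            (le_of_lt (lt_trans (mem_ball_zero_iff.mp hx) hRr))
          show t < u x
          rw [hug x]; exact hxA.2
        have hfin := hμ t ht
        obtain ⟨n, hn⟩ := ENNReal.exists_nat_gt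
          (ENNReal.div_lt_top hfin.ne hω_pos.ne').ne
        have hlt := (ENNReal.div_lt_iff (Or.inl hω_pos.ne') (Or.inl hω_fin.ne)).mp hn
        have hge : (n : ℝ≥0∞) * ω ≤ volume {x : EuclideanSpace ℝ (Fin N) | t < u x} := by
          have hn' : ((n : ℝ)) ≤ (n : ℝ) ^ (N : ℝ) := by
            rw [Real.rpow_natCast]
            exact_mod_cast Nat.le_self_pow (by omega) n
          calc (n : ℝ≥0∞) * ω ≤ ENNReal.ofReal ((n : ℝ) ^ (N : ℝ)) * ω := by
                gcongr
                rw [← ENNReal.ofReal_natCast n]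
                exact ENNReal.ofReal_le_ofReal hn'
            _ = volume (ball (0 : EuclideanSpace ℝ (Fin N)) (n : ℝ)) :=
                (hvol_ball _ (Nat.cast_nonneg n)).symm
            _ ≤ _ := measure_mono (hballsub _)
        exact absurd hlt (not_lt.mpr hge)
      refine ⟨sSup A, ?_, ?_, ?_⟩
      · refine le_csSup hbdd ⟨le_rfl, ?_⟩
        exact lt_of_lt_of_le hr0 (hg_anti (Set.mem_Ici.mpr le_rfl) (Set.mem_Ici.mpr hr00) hr00)
      · intro x hx
        obtain ⟨r, hrA, hr⟩ := exists_lt_of_lt_csSup hAne (mem_ball_zero_iff.mp hx)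
        have hxA := hdown r hrA ‖x‖ (norm_nonneg x) hr.le
        show t < u x
        rw [hug x]; exact hxA.2
      · intro x hx
        have hxA : ‖x‖ ∈ A := ⟨norm_nonneg x, by rw [← hug x]; exact hx⟩
        exact mem_closedBall_zero_iff.mpr (le_csSup hbdd hxA)
    · push_neg at hA
      refine ⟨0, le_rfl, ?_, ?_⟩
      · rw [ball_zero]
        exact empty_subset _
      · intro x hx
        have : t < g ‖x‖ := by rw [← hug x]; exact hx
        exact absurd this (not_lt.mpr (hA ‖x‖ (norm_nonneg x)))
  choose! ρ hρ1 hρ2 hρ3 using key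
  -- measure of superlevel sets
  have hμt : ∀ t : ℝ, 0 < t → volume {x : EuclideanSpace ℝ (Fin N) | t < u x}
      = ENNReal.ofReal (ρ t ^ (N : ℝ)) * ω := by
    intro t ht
    refine le_antisymm ?_ ?_
    · calc volume {x : EuclideanSpace ℝ (Fin N) | t < u x}
          ≤ volume (closedBall (0 : EuclideanSpace ℝ (Fin N)) (ρ t)) :=
            measure_mono (hρ3 t ht)
        _ = _ := hvol_cball _ (hρ1 t ht)
    · rw [← hvol_ball _ (hρ1 t ht)]
      exact measure_mono (hρ2 t ht)
  have hae : ∀ t : ℝ, 0 < t → {x : EuclideanSpace ℝ (Fin N) | t < u x}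
      =ᵐ[volume] ball (0 : EuclideanSpace ℝ (Fin N)) (ρ t) := by
    intro t ht
    rw [MeasureTheory.ae_eq_set]
    constructor
    · have hsub : {x : EuclideanSpace ℝ (Fin N) | t < u x}
            \ ball (0 : EuclideanSpace ℝ (Fin N)) (ρ t)
          ⊆ sphere (0 : EuclideanSpace ℝ (Fin N)) (ρ t) := by
        rw [← closedBall_diff_ball]
        exact fun x hx => ⟨hρ3 t ht hx.1, hx.2⟩
      exact measure_mono_null hsub (Measure.addHaar_sphere volume _ _)
    · rw [Set.diff_eq_empty.mpr (hρ2 t ht)]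
      exact measure_empty
  -- abbreviations
  set J := ∫⁻ t in Ioi (0 : ℝ),
    ENNReal.ofReal (ρ t ^ ((N : ℝ) - p * s)) * ENNReal.ofReal (t ^ (p - 1)) with hJ_def
  have he_nonneg : (0 : ℝ) ≤ ((N : ℝ) - p * s) / N := div_nonneg hNa.le hNR.le
  -- LHS
  have hL : lorentzNorm N ((N : ℝ) * p / ((N : ℝ) - p * s)) p u ^ p
      = ENNReal.ofReal ((N : ℝ) * p / ((N : ℝ) - p * s))
          * (ω ^ (((N : ℝ) - p * s) / (N : ℝ)) * J) := by
    unfold lorentzNorm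
    rw [← ENNReal.rpow_mul, one_div, inv_mul_cancel₀ hp0.ne', ENNReal.rpow_one]
    simp only [show ∀ x : EuclideanSpace ℝ (Fin N), |u x| = u x from
      fun x => abs_of_nonneg (hu_nonneg x)]
    rw [show p / ((N : ℝ) * p / ((N : ℝ) - p * s)) = ((N : ℝ) - p * s) / (N : ℝ) by
      rw [div_div_eq_mul_div, mul_comm (N : ℝ) p, mul_div_mul_left _ _ hp0.ne']]
    congr 1
    rw [hJ_def, ← lintegral_const_mul' _ _
      (ENNReal.rpow_ne_top_of_nonneg he_nonneg hω_fin.ne)]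
    refine setLIntegral_congr_fun measurableSet_Ioi (fun t ht => ?_)
    rw [hμt t ht, ENNReal.mul_rpow_of_nonneg _ _ he_nonneg,
      ENNReal.ofReal_rpow_of_nonneg (Real.rpow_nonneg (hρ1 t ht) _) he_nonneg,
      ← Real.rpow_mul (hρ1 t ht),
      show (N : ℝ) * (((N : ℝ) - p * s) / (N : ℝ)) = (N : ℝ) - p * s by
        rw [mul_comm]; exact div_mul_cancel₀ _ hNR.ne']
    rw [mul_comm (ENNReal.ofReal (ρ t ^ ((N : ℝ) - p * s)))
      (ω ^ (((N : ℝ) - p * s) / (N : ℝ))), mul_assoc]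
  -- RHS
  have hR : (∫⁻ x, ENNReal.ofReal (u x ^ p * ‖x‖ ^ (-(p * s))))
      = (ENNReal.ofReal p * (ENNReal.ofReal ((N : ℝ) / ((N : ℝ) - p * s)) * ω)) * J := by
    have hw : Measurable fun x : EuclideanSpace ℝ (Fin N) =>
        ENNReal.ofReal (‖x‖ ^ (-(p * s))) :=
      (measurable_norm.pow_const _).ennreal_ofReal
    have hf : Measurable fun x : EuclideanSpace ℝ (Fin N) => ENNReal.ofReal (u x ^ p) :=
      (hu_meas.pow_const _).ennreal_ofReal
    have hwd := lintegral_withDensity_eq_lintegral_mul volume hw hf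
    simp only [Pi.mul_apply] at hwd
    have step1 : (∫⁻ x, ENNReal.ofReal (u x ^ p * ‖x‖ ^ (-(p * s))))
        = ∫⁻ x, ENNReal.ofReal (u x ^ p)
            ∂(volume.withDensity fun x => ENNReal.ofReal (‖x‖ ^ (-(p * s)))) := by
      rw [hwd]
      refine lintegral_congr fun x => ?_
      rw [← ENNReal.ofReal_mul (Real.rpow_nonneg (norm_nonneg x) _), mul_comm]
    rw [step1, lintegral_rpow_eq_lintegral_meas_lt_mul _ (ae_of_all _ hu_nonneg)
      hu_meas.aemeasurable hp0, hJ_def, mul_assoc,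
      ← lintegral_const_mul' _ _ (ENNReal.mul_ne_top ENNReal.ofReal_ne_top hω_fin.ne)]
    congr 1
    refine setLIntegral_congr_fun measurableSet_Ioi (fun t ht => ?_)
    have hwd_apply : (volume.withDensity fun x : EuclideanSpace ℝ (Fin N) =>
        ENNReal.ofReal (‖x‖ ^ (-(p * s)))) {x | t < u x}
        = ∫⁻ x in {x : EuclideanSpace ℝ (Fin N) | t < u x},
            ENNReal.ofReal (‖x‖ ^ (-(p * s))) :=
      withDensity_apply _ (measurableSet_lt measurable_const hu_meas)
    rw [hwd_apply, setLIntegral_congr (hae t ht),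
      lintegral_ball_rpow_neg N hN ha0 haN (hρ1 t ht), ← hω_def,
      ENNReal.ofReal_mul (by positivity : (0 : ℝ) ≤ (N : ℝ) / ((N : ℝ) - p * s))]
    ring
  rw [hL, hR]
  obtain ⟨wr, hwr0, hwr_eq⟩ : ∃ wr : ℝ, 0 < wr ∧ ω = ENNReal.ofReal wr :=
    ⟨ω.toReal, ENNReal.toReal_pos hω_pos.ne' hω_fin.ne, (ENNReal.ofReal_toReal hω_fin.ne).symm⟩
  have hconst : ENNReal.ofReal ((N : ℝ) * p / ((N : ℝ) - p * s))
        * ω ^ (((N : ℝ) - p * s) / (N : ℝ))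
      = ENNReal.ofReal (((N : ℝ) / sphereArea N) ^ (p * s / (N : ℝ)))
        * (ENNReal.ofReal p * (ENNReal.ofReal ((N : ℝ) / ((N : ℝ) - p * s)) * ω)) := by
    simp only [sphereArea, ← hω_def]
    rw [hwr_eq, ENNReal.toReal_ofReal hwr0.le,
      ENNReal.ofReal_rpow_of_nonneg hwr0.le he_nonneg,
      ← ENNReal.ofReal_mul (by positivity : (0 : ℝ) ≤ (N : ℝ) * p / ((N : ℝ) - p * s)),
      ← ENNReal.ofReal_mul (by positivity : (0 : ℝ) ≤ (N : ℝ) / ((N : ℝ) - p * s)),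
      ← ENNReal.ofReal_mul hp0.le,
      ← ENNReal.ofReal_mul (by positivity :
        (0 : ℝ) ≤ ((N : ℝ) / ((N : ℝ) * wr)) ^ (p * s / (N : ℝ)))]
    congr 1
    rw [show ((N : ℝ) - p * s) / (N : ℝ) = -(p * s / (N : ℝ)) + 1 by
        rw [sub_div, div_self hNR.ne']; ring,
      Real.rpow_add hwr0, Real.rpow_one,
      show (N : ℝ) / ((N : ℝ) * wr) = wr⁻¹ by
        rw [div_mul_eq_div_div, div_self hNR.ne', one_div],
      Real.inv_rpow hwr0.le, ← Real.rpow_neg hwr0.le]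
    ring
  calc ENNReal.ofReal ((N : ℝ) * p / ((N : ℝ) - p * s))
        * (ω ^ (((N : ℝ) - p * s) / (N : ℝ)) * J)
      = (ENNReal.ofReal ((N : ℝ) * p / ((N : ℝ) - p * s))
          * ω ^ (((N : ℝ) - p * s) / (N : ℝ))) * J := (mul_assoc _ _ _).symm
    _ = (ENNReal.ofReal (((N : ℝ) / sphereArea N) ^ (p * s / (N : ℝ)))
          * (ENNReal.ofReal p * (ENNReal.ofReal ((N : ℝ) / ((N : ℝ) - p * s)) * ω))) * J := by
        rw [hconst]
    _ = ENNReal.ofReal (((N : ℝ) / sphereArea N) ^ (p * s / (N : ℝ)))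
          * ((ENNReal.ofReal p * (ENNReal.ofReal ((N : ℝ) / ((N : ℝ) - p * s)) * ω)) * J) :=
        mul_assoc _ _ _
end
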